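/- (Proposition 1, disjoint edges, same SNP-set) Let v1, v2, v3, v4 be pairwise distinct nodes and p, p' SNPs with q(p) = q(p'), and assume σ_f² + 2σ_g² + 2σ_h² > 0. Then Cor(L(v1,v2,p), L(v3,v4,p')) = σ_f²/(σ_f² + 2σ_g² + 2σ_h²). -/

import Mathlib

open MeasureTheory ProbabilityTheory

/-- Covariance of two real random variables: `Cov(X,Y) = E[(X - E X)(Y - E Y)]`. -/
noncomputable def cov {Ω : Type*} [MeasurableSpace Ω] (μ : Measure Ω) (X Y : Ω → ℝ) : ℝ :=
  ∫ ω, (X ω - ∫ x, X x ∂μ) * (Y ω - ∫ x, Y x ∂μ) ∂μ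

/-- Pearson correlation: `Cor(X,Y) = Cov(X,Y) / (Var(X)^{1/2} Var(Y)^{1/2})`. -/
noncomputable def cor {Ω : Type*} [MeasurableSpace Ω] (μ : Measure Ω) (X Y : Ω → ℝ) : ℝ :=
  cov μ X Y / (Real.sqrt (variance X μ) * Real.sqrt (variance Y μ))

set_option linter.unusedSectionVars false

section helpers
variable {Ω : Type*} [MeasurableSpace Ω] {μ : Measure Ω} [IsProbabilityMeasure μ]

lemma memL2_mul_integrable {f g : Ω → ℝ} (hf : MemLp f 2 μ) (hg : MemLp g 2 μ) :
    Integrable (fun ω => f ω * g ω) μ := by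
  have h : Integrable (fun x => ((f x + g x) ^ 2 - f x ^ 2) - g x ^ 2) μ :=
    ((hf.add hg).integrable_sq.sub hf.integrable_sq).sub hg.integrable_sq
  have h2 : (fun ω => f ω * g ω)
      = fun x => (((f x + g x) ^ 2 - f x ^ 2) - g x ^ 2) / 2 := by
    funext x; ring
  rw [h2]
  exact h.div_const 2

lemma cov_eq_zero_of_indepFun {f g : Ω → ℝ} (hf : MemLp f 2 μ) (hg : MemLp g 2 μ)
    (h : IndepFun f g μ) : cov μ f g = 0 := by
  have h' : IndepFun (fun ω => f ω - ∫ x, f x ∂μ) (fun ω => g ω - ∫ x, g x ∂μ) μ :=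
    h.comp (measurable_id.sub_const _) (measurable_id.sub_const _)
  have hfi := hf.integrable one_le_two
  have hgi := hg.integrable one_le_two
  unfold cov
  have key := h'.integral_fun_mul_eq_mul_integral (hfi.sub (integrable_const _)).aestronglyMeasurable
    (hgi.sub (integrable_const _)).aestronglyMeasurable
  have key2 : ∫ ω, (f ω - ∫ x, f x ∂μ) * (g ω - ∫ x, g x ∂μ) ∂μ
      = (∫ ω, f ω - ∫ x, f x ∂μ ∂μ) * ∫ ω, g ω - ∫ x, g x ∂μ ∂μ := key
  rw [key2, integral_sub hfi (integrable_const _), integral_const]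
  simp

lemma cov_self {f : Ω → ℝ} (hf : MemLp f 2 μ) : cov μ f f = variance f μ := by
  rw [variance_eq_integral hf.aemeasurable]
  unfold cov
  congr 1
  funext ω
  simp [pow_two]

lemma cov_sum_sum {ι κ : Type*} (s : Finset ι) (t : Finset κ) (X : ι → Ω → ℝ) (Y : κ → Ω → ℝ)
    (hX : ∀ i ∈ s, MemLp (X i) 2 μ) (hY : ∀ j ∈ t, MemLp (Y j) 2 μ) :
    cov μ (∑ i ∈ s, X i) (∑ j ∈ t, Y j) = ∑ i ∈ s, ∑ j ∈ t, cov μ (X i) (Y j) := by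
  have hXi : ∀ i ∈ s, Integrable (X i) μ := fun i hi => (hX i hi).integrable one_le_two
  have hYj : ∀ j ∈ t, Integrable (Y j) μ := fun j hj => (hY j hj).integrable one_le_two
  unfold cov
  simp only [Finset.sum_apply]
  rw [integral_finset_sum s hXi, integral_finset_sum t hYj]
  simp_rw [← Finset.sum_sub_distrib, Finset.sum_mul_sum]
  have hint1 : ∀ i ∈ s, ∀ j ∈ t, Integrable
      (fun ω => (X i ω - ∫ a, X i a ∂μ) * (Y j ω - ∫ a, Y j a ∂μ)) μ :=
    fun i hi j hj =>
      memL2_mul_integrable ((hX i hi).sub (memLp_const _)) ((hY j hj).sub (memLp_const _))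
  have hint2 : ∀ i ∈ s, Integrable
      (fun ω => ∑ j ∈ t, (X i ω - ∫ a, X i a ∂μ) * (Y j ω - ∫ a, Y j a ∂μ)) μ :=
    fun i hi => integrable_finset_sum t (hint1 i hi)
  rw [integral_finset_sum s hint2]
  refine Finset.sum_congr rfl fun i hi => ?_
  rw [integral_finset_sum t (hint1 i hi)]

end helpers

/-- Proposition 1, disjoint edges, same SNP-set. -/
theorem nrss_cor_disjoint_edges_same_set
    {Ω Q V P : Type*} [MeasurableSpace Ω]
    (μ : Measure Ω) [IsProbabilityMeasure μ]
    (q : P → Q)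
    (F : Q → Ω → ℝ) (G : V → Ω → ℝ) (H : V × P → Ω → ℝ)
    (σf2 σg2 σh2 : ℝ)
    (hIndep : iIndepFun
      (Sum.elim F (Sum.elim G H)) μ)
    (hFmem : ∀ i, MemLp (F i) 2 μ)
    (hGmem : ∀ i, MemLp (G i) 2 μ)
    (hHmem : ∀ i, MemLp (H i) 2 μ)
    (hFvar : ∀ i, variance (F i) μ = σf2)
    (hGvar : ∀ i, variance (G i) μ = σg2)
    (hHvar : ∀ i, variance (H i) μ = σh2)
    (L : V → V → P → Ω → ℝ)
    (hL : ∀ v v' p ω, L v v' p ω = F (q p) ω + G v ω + G v' ω + H (v, p) ω + H (v', p) ω)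
    (v1 v2 v3 v4 : V) (h12 : v1 ≠ v2) (h13 : v1 ≠ v3) (h14 : v1 ≠ v4)
    (h23 : v2 ≠ v3) (h24 : v2 ≠ v4) (h34 : v3 ≠ v4)
    (p p' : P) (hq : q p = q p')
    (hpos : 0 < σf2 + 2 * σg2 + 2 * σh2) :
    cor μ (L v1 v2 p) (L v3 v4 p') = σf2 / (σf2 + 2 * σg2 + 2 * σh2) := by
  classical
  set X : Q ⊕ (V ⊕ V × P) → Ω → ℝ := Sum.elim F (Sum.elim G H) with hXdef
  have hXmem : ∀ i, MemLp (X i) 2 μ := by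
    rintro (a | b | c)
    exacts [hFmem a, hGmem b, hHmem c]
  set s : Finset (Q ⊕ (V ⊕ V × P)) :=
    {Sum.inl (q p), Sum.inr (Sum.inl v1), Sum.inr (Sum.inl v2),
      Sum.inr (Sum.inr (v1, p)), Sum.inr (Sum.inr (v2, p))} with hsdef
  set t : Finset (Q ⊕ (V ⊕ V × P)) :=
    {Sum.inl (q p), Sum.inr (Sum.inl v3), Sum.inr (Sum.inl v4),
      Sum.inr (Sum.inr (v3, p')), Sum.inr (Sum.inr (v4, p'))} with htdef
  have hs_sum : L v1 v2 p = ∑ i ∈ s, X i := by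
    funext ω
    rw [Finset.sum_apply, hL, hsdef]
    rw [Finset.sum_insert (by simp), Finset.sum_insert (by simp [h12]),
      Finset.sum_insert (by simp), Finset.sum_insert (by simp [h12]), Finset.sum_singleton]
    simp only [hXdef, Sum.elim_inl, Sum.elim_inr]
    ring
  have ht_sum : L v3 v4 p' = ∑ i ∈ t, X i := by
    funext ω
    rw [Finset.sum_apply, hL, htdef]
    rw [Finset.sum_insert (by simp), Finset.sum_insert (by simp [h34]),
      Finset.sum_insert (by simp), Finset.sum_insert (by simp [h34]), Finset.sum_singleton]
    simp only [hXdef, Sum.elim_inl, Sum.elim_inr]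
    rw [hq]
    ring
  -- covariance
  have hzero : ∀ i j : Q ⊕ (V ⊕ V × P), i ≠ j → cov μ (X i) (X j) = 0 :=
    fun i j hij => cov_eq_zero_of_indepFun (hXmem i) (hXmem j) (hIndep.indepFun hij)
  have hcov : cov μ (L v1 v2 p) (L v3 v4 p') = σf2 := by
    rw [hs_sum, ht_sum, cov_sum_sum s t X X (fun i _ => hXmem i) (fun j _ => hXmem j)]
    have inner : ∀ i ∈ s, ∑ j ∈ t, cov μ (X i) (X j)
        = if i ∈ t then variance (X i) μ else 0 := by
      intro i _
      by_cases hit : i ∈ t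
      · rw [if_pos hit, Finset.sum_eq_single_of_mem i hit
          (fun j _ hji => hzero i j (Ne.symm hji)), cov_self (hXmem i)]
      · rw [if_neg hit]
        exact Finset.sum_eq_zero fun j hj => hzero i j (fun h => hit (h ▸ hj))
    rw [Finset.sum_congr rfl inner, hsdef]
    rw [Finset.sum_insert (by simp), Finset.sum_insert (by simp [h12]),
      Finset.sum_insert (by simp), Finset.sum_insert (by simp [h12]), Finset.sum_singleton]
    rw [if_pos (by rw [htdef]; exact Finset.mem_insert_self _ _),
      if_neg (by simp [htdef, h13, h14]), if_neg (by simp [htdef, h23, h24]),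
      if_neg (by simp [htdef, h13, h14]), if_neg (by simp [htdef, h23, h24])]
    simp only [hXdef, Sum.elim_inl]
    rw [hFvar]
    ring
  -- variances
  have hvars : ∀ (u : Finset (Q ⊕ (V ⊕ V × P))),
      variance (∑ i ∈ u, X i) μ = ∑ i ∈ u, variance (X i) μ :=
    fun u => IndepFun.variance_sum (fun i _ => hXmem i)
      (fun i _ j _ hij => hIndep.indepFun hij)
  have hvar1 : variance (L v1 v2 p) μ = σf2 + 2 * σg2 + 2 * σh2 := by
    rw [hs_sum, hvars, hsdef]
    rw [Finset.sum_insert (by simp), Finset.sum_insert (by simp [h12]),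
      Finset.sum_insert (by simp), Finset.sum_insert (by simp [h12]), Finset.sum_singleton]
    simp only [hXdef, Sum.elim_inl, Sum.elim_inr]
    rw [hFvar, hGvar, hGvar, hHvar, hHvar]
    ring
  have hvar2 : variance (L v3 v4 p') μ = σf2 + 2 * σg2 + 2 * σh2 := by
    rw [ht_sum, hvars, htdef]
    rw [Finset.sum_insert (by simp), Finset.sum_insert (by simp [h34]),
      Finset.sum_insert (by simp), Finset.sum_insert (by simp [h34]), Finset.sum_singleton]
    simp only [hXdef, Sum.elim_inl, Sum.elim_inr]
    rw [hFvar, hGvar, hGvar, hHvar, hHvar]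
    ring
  unfold cor
  rw [hcov, hvar1, hvar2, Real.mul_self_sqrt hpos.le]
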